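/- Let σ > 0 and 0 ≤ P < σ². Then the Kullback–Leibler divergence between the centered real Gaussian measure of variance σ² and the centered real Gaussian measure of variance σ² + P satisfies D(N(0,σ²) ‖ N(0,σ²+P)) ≤ P²/(4σ⁴). -/

import Mathlib

open MeasureTheory ProbabilityTheory Real
open scoped NNReal ENNReal

lemma integral_sq_exp {b : ℝ} (hb : 0 < b) :
    ∫ x : ℝ, x ^ 2 * exp (-b * x ^ 2) = Real.sqrt π / (2 * b * Real.sqrt b) := by
  have h1 : ∫ x : ℝ, x ^ 2 * exp (-b * x ^ 2) = 2 * ∫ x in Set.Ioi (0:ℝ), x ^ 2 * exp (-b * x ^ 2) := by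
    rw [← integral_comp_abs (f := fun x => x ^ 2 * exp (-b * x ^ 2))]
    congr 1 with x
    rw [sq_abs]
  have h2 : ∫ x in Set.Ioi (0:ℝ), x ^ 2 * exp (-b * x ^ 2)
      = b ^ (-(3:ℝ)/2) * (1/2) * Real.Gamma ((3:ℝ)/2) := by
    have := integral_rpow_mul_exp_neg_mul_rpow (p := 2) (q := 2) (b := b) two_pos (by norm_num) hb
    rw [show ((-(2+1)/2 : ℝ)) = -(3:ℝ)/2 by norm_num, show ((2+1)/2 : ℝ) = (3:ℝ)/2 by norm_num] at this
    rw [← this]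
    refine setIntegral_congr_fun measurableSet_Ioi (fun x hx => ?_)
    have h2' : (x:ℝ) ^ (2:ℝ) = x ^ (2:ℕ) := by
      rw [show (2:ℝ) = ((2:ℕ):ℝ) by norm_num, rpow_natCast]
    rw [h2']
  have h3 : Real.Gamma ((3:ℝ)/2) = Real.sqrt π / 2 := by
    have := Real.Gamma_add_one (s := (1/2:ℝ)) (by norm_num)
    rw [show (1/2 + 1 : ℝ) = 3/2 by norm_num] at this
    rw [this, Real.Gamma_one_half_eq]
    ring
  have h4 : b ^ (-(3:ℝ)/2) = 1 / (b * Real.sqrt b) := by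
    rw [show (-(3:ℝ)/2) = -(1 + 1/2) by norm_num, rpow_neg hb.le, rpow_add hb,
      rpow_one, ← Real.sqrt_eq_rpow]
    rw [one_div]
  rw [h1, h2, h3, h4]
  field_simp

lemma integral_sq_gaussianReal {v : ℝ} (hv : 0 < v) :
    ∫ x, x ^ 2 ∂(gaussianReal 0 v.toNNReal) = v := by
  have hvne : v.toNNReal ≠ 0 := by simp [Real.toNNReal_eq_zero, not_le, hv]
  have hvc : ((v.toNNReal : ℝ≥0) : ℝ) = v := Real.coe_toNNReal v hv.le
  rw [gaussianReal_of_var_ne_zero _ hvne]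
  have hd : gaussianPDF 0 v.toNNReal
      = fun x => ((fun y => (gaussianPDFReal 0 v.toNNReal y).toNNReal) x : ℝ≥0∞) := rfl
  rw [hd, integral_withDensity_eq_integral_smul
    ((measurable_gaussianPDFReal 0 v.toNNReal).real_toNNReal) (fun x => x ^ 2)]
  have hb : 0 < (2*v)⁻¹ := by positivity
  have : ∀ x : ℝ, (gaussianPDFReal 0 v.toNNReal x).toNNReal • x ^ 2
      = (Real.sqrt (2*π*v))⁻¹ * (x ^ 2 * exp (-(2*v)⁻¹ * x ^ 2)) := by
    intro x
    rw [NNReal.smul_def, Real.coe_toNNReal _ (gaussianPDFReal_nonneg _ _ _)]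
    rw [gaussianPDFReal]
    simp only [hvc, sub_zero, one_div]
    rw [neg_div, div_eq_inv_mul, smul_eq_mul]
    ring
  simp only [this]
  rw [integral_const_mul, integral_sq_exp hb]
  have h2v : (0:ℝ) < 2*v := by linarith
  rw [Real.sqrt_inv, show 2*π*v = (2*v)*π by ring, Real.sqrt_mul h2v.le]
  have hs2v : (0:ℝ) < Real.sqrt (2*v) := Real.sqrt_pos.mpr h2v
  have hsπ : (0:ℝ) < Real.sqrt π := Real.sqrt_pos.mpr pi_pos
  field_simp

lemma integrable_sq_gaussianReal {v : ℝ} (hv : 0 < v) :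
    Integrable (fun x => x ^ 2) (gaussianReal 0 v.toNNReal) := by
  have hvne : v.toNNReal ≠ 0 := by simp [Real.toNNReal_eq_zero, not_le, hv]
  have hvc : ((v.toNNReal : ℝ≥0) : ℝ) = v := Real.coe_toNNReal v hv.le
  rw [gaussianReal_of_var_ne_zero _ hvne]
  have hd : gaussianPDF 0 v.toNNReal
      = fun x => ((fun y => (gaussianPDFReal 0 v.toNNReal y).toNNReal) x : ℝ≥0∞) := rfl
  rw [hd, integrable_withDensity_iff_integrable_smul
    ((measurable_gaussianPDFReal 0 v.toNNReal).real_toNNReal)]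
  have hb : 0 < (2*v)⁻¹ := by positivity
  have hint : Integrable (fun x : ℝ => x ^ 2 * exp (-(2*v)⁻¹ * x ^ 2)) := by
    have := integrable_rpow_mul_exp_neg_mul_sq hb (show (-1:ℝ) < 2 by norm_num)
    refine this.congr ?_
    filter_upwards with x
    rw [show (2:ℝ) = ((2:ℕ):ℝ) by norm_num, rpow_natCast]
  refine (hint.const_mul ((Real.sqrt (2*π*v))⁻¹)).congr ?_
  filter_upwards with x
  rw [NNReal.smul_def, Real.coe_toNNReal _ (gaussianPDFReal_nonneg _ _ _)]
  rw [gaussianPDFReal]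
  simp only [hvc, sub_zero, one_div]
  rw [neg_div, div_eq_inv_mul, smul_eq_mul]
  ring

lemma log_one_add_le {t : ℝ} (ht : 0 ≤ t) :
    Real.log (1 + t) ≤ t - t ^ 2 / (2 * (1 + t)) := by
  set f : ℝ → ℝ := fun t => t - t ^ 2 / (2 * (1 + t)) - Real.log (1 + t) with hfdef
  have hf : ∀ x : ℝ, 0 < 1 + x → HasDerivAt f (x ^ 2 / (2 * (1 + x) ^ 2)) x := by
    intro x hx
    have hne : (1:ℝ) + x ≠ 0 := hx.ne'
    have hne2 : (2:ℝ) * (1 + x) ≠ 0 := by positivity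
    have h1 : HasDerivAt (fun t : ℝ => t) 1 x := hasDerivAt_id x
    have hnum : HasDerivAt (fun t : ℝ => t ^ 2) (2 * x) x := by
      simpa using hasDerivAt_pow 2 x
    have hden : HasDerivAt (fun t : ℝ => 2 * (1 + t)) (2 * 1) x :=
      ((hasDerivAt_id x).const_add 1).const_mul 2
    have hdiv := hnum.div hden hne2
    have hlog : HasDerivAt (fun t : ℝ => Real.log (1 + t)) (1 / (1 + x)) x := by
      simpa using ((hasDerivAt_id x).const_add 1).log hne
    have := (h1.sub hdiv).sub hlog
    refine this.congr_deriv ?_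
    field_simp
    ring
  have hmono : MonotoneOn f (Set.Ici (0:ℝ)) := by
    refine monotoneOn_of_deriv_nonneg (convex_Ici 0) ?_ ?_ ?_
    · intro x hx
      exact (hf x (by simp at hx; linarith)).continuousAt.continuousWithinAt
    · intro x hx
      rw [interior_Ici] at hx
      exact ((hf x (by simp at hx; linarith)).differentiableAt).differentiableWithinAt
    · intro x hx
      rw [interior_Ici] at hx
      rw [(hf x (by simp at hx; linarith)).deriv]
      positivity
  have h0 : f 0 = 0 := by simp [hfdef]
  have := hmono (Set.self_mem_Ici) ht ht
  rw [h0] at this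
  simp only [hfdef] at this
  linarith


/-- The Kullback–Leibler divergence `D(P‖Q) = ∫ log(dP/dQ) dP`
(for `P ≪ Q` this equals `∫ p(x) ln(p(x)/q(x)) dx` where `p, q` are densities). -/
noncomputable def klDiv {α : Type*} [MeasurableSpace α] (P Q : Measure α) : ℝ :=
  ∫ x, Real.log ((P.rnDeriv Q) x).toReal ∂P

/-- For `σ > 0` and `0 ≤ P < σ²`, the Kullback–Leibler divergence between the
centered real Gaussian of variance `σ²` and the centered real Gaussian of
variance `σ² + P` satisfies `D(N(0,σ²) ‖ N(0,σ²+P)) ≤ P²/(4σ⁴)`. -/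
theorem stmt_2 (σ P : ℝ) (hσ : 0 < σ) (hP0 : 0 ≤ P) (hP : P < σ ^ 2) :
    klDiv (gaussianReal 0 (σ ^ 2).toNNReal) (gaussianReal 0 (σ ^ 2 + P).toNNReal)
      ≤ P ^ 2 / (4 * σ ^ 4) := by
  set v : ℝ := σ ^ 2 with hvdef
  set w : ℝ := σ ^ 2 + P with hwdef
  have hv : 0 < v := by positivity
  have hw : 0 < w := by positivity
  have hv1ne : v.toNNReal ≠ 0 := by simp [Real.toNNReal_eq_zero, not_le, hv]
  have hv2ne : w.toNNReal ≠ 0 := by simp [Real.toNNReal_eq_zero, not_le, hw]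
  have hvc : ((v.toNNReal : ℝ≥0) : ℝ) = v := Real.coe_toNNReal v hv.le
  have hwc : ((w.toNNReal : ℝ≥0) : ℝ) = w := Real.coe_toNNReal w hw.le
  set μ : Measure ℝ := gaussianReal 0 v.toNNReal with hμdef
  set ν : Measure ℝ := gaussianReal 0 w.toNNReal with hνdef
  set c : ℝ := Real.log (Real.sqrt (2*π*w)) - Real.log (Real.sqrt (2*π*v)) with hcdef
  set A : ℝ := (2*w)⁻¹ - (2*v)⁻¹ with hAdef
  -- Step 1: rnDeriv identity a.e. volume
  have h1 : μ.rnDeriv ν =ᵐ[volume]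
      fun x => (gaussianPDF 0 w.toNNReal x)⁻¹ * gaussianPDF 0 v.toNNReal x := by
    have h2 := Measure.rnDeriv_withDensity_right μ volume
      (measurable_gaussianPDF 0 w.toNNReal).aemeasurable
      (ae_of_all _ fun x => (gaussianPDF_pos 0 hv2ne x).ne')
      (ae_of_all _ fun x => ENNReal.ofReal_ne_top)
    have h3 := rnDeriv_gaussianReal 0 v.toNNReal
    rw [hνdef, gaussianReal_of_var_ne_zero _ hv2ne]
    filter_upwards [h2, h3] with x hx2 hx3
    rw [hx2, hx3]
  -- Step 2: integrand a.e. μ equals c + A x^2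
  have hμac : μ ≪ volume := gaussianReal_absolutelyContinuous 0 hv1ne
  have hae : (fun x => Real.log ((μ.rnDeriv ν) x).toReal) =ᵐ[μ]
      fun x => c + A * x ^ 2 := by
    filter_upwards [hμac.ae_le h1] with x hx
    rw [hx]
    have hp1 : 0 < gaussianPDFReal 0 v.toNNReal x := gaussianPDFReal_pos _ _ _ hv1ne
    have hp2 : 0 < gaussianPDFReal 0 w.toNNReal x := gaussianPDFReal_pos _ _ _ hv2ne
    rw [gaussianPDF, gaussianPDF, ENNReal.toReal_mul, ENNReal.toReal_inv,
      ENNReal.toReal_ofReal hp1.le, ENNReal.toReal_ofReal hp2.le,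
      Real.log_mul (by positivity) hp1.ne', Real.log_inv]
    have hlog : ∀ u : ℝ, 0 < u → ∀ hune : u.toNNReal ≠ 0,
        Real.log (gaussianPDFReal 0 u.toNNReal x)
          = -Real.log (Real.sqrt (2*π*u)) - x ^ 2 / (2*u) := by
      intro u hu hune
      rw [gaussianPDFReal]
      simp only [Real.coe_toNNReal u hu.le, sub_zero, one_div]
      rw [Real.log_mul (by positivity) (exp_ne_zero _), Real.log_inv, Real.log_exp, neg_div]
      ring
    rw [hlog v hv hv1ne, hlog w hw hv2ne]
    simp only [hcdef, hAdef]
    field_simp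
    ring
  -- Step 3: compute the integral
  have hkl : klDiv μ ν = c + A * v := by
    rw [klDiv, integral_congr_ae hae]
    rw [integral_add (integrable_const c) ((integrable_sq_gaussianReal hv).const_mul A),
      integral_const, integral_const_mul, integral_sq_gaussianReal hv]
    simp
  rw [hkl]
  -- Step 4: the numeric inequality
  have hlogc : c = (Real.log w - Real.log v) / 2 := by
    rw [hcdef, Real.log_sqrt (by positivity), Real.log_sqrt (by positivity),
      Real.log_mul (by positivity) hw.ne', Real.log_mul (by positivity) hv.ne',
      Real.log_mul (by norm_num) (Real.pi_ne_zero)]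
    ring
  set t : ℝ := P / v with htdef
  have ht0 : 0 ≤ t := by positivity
  have ht1 : w = v * (1 + t) := by rw [htdef]; field_simp; rfl
  have hlogt : Real.log w - Real.log v = Real.log (1 + t) := by
    rw [ht1, Real.log_mul hv.ne' (by positivity)]
    ring
  have hkey := log_one_add_le ht0
  have hσ4 : σ ^ 4 = v ^ 2 := by rw [hvdef]; ring
  rw [hlogc, hlogt, hσ4]
  have hPt : P = t * v := by rw [htdef]; field_simp
  have h1t : (0:ℝ) < 1 + t := by linarith
  rw [hAdef, ht1, hPt]
  have hgoal : Real.log (1+t) / 2 + ((2*(v*(1+t)))⁻¹ - (2*v)⁻¹) * v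
      = Real.log (1+t) / 2 - t / (2*(1+t)) := by
    field_simp
    ring
  rw [hgoal]
  have hfin : (t*v)^2 / (4*v^2) = t^2/4 := by
    field_simp
  rw [hfin]
  have e : (t - t ^ 2 / (2*(1+t)))/2 - t/(2*(1+t)) = t ^ 2 / (4*(1+t)) := by
    field_simp
    ring
  have e2 : t ^ 2 / (4*(1+t)) ≤ t ^ 2 / 4 :=
    div_le_div_of_nonneg_left (sq_nonneg t) (by norm_num) (by linarith)
  linarith
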